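/- arXiv:2605.03200 — 4 statements merged into one kernel-verified Lean document; each statement's English description precedes it below -/
import Mathlib

section
/- For integers N ≥ 1 and s ≥ 0, (1/(2^s · s!)) · U_{N+s-1}^{(s)}(z) = ∑_{j=0}^{⌊(N-1)/2⌋} (-1)^j · C(N-1+s-j, j) · C(N-1+s-2j, s) · 2^(N-1-2j) · z^(N-1-2j). -/
open Polynomial Finset

noncomputable def f (M j : ℕ) : ℂ[X] :=
  Polynomial.C ((-1:ℂ)^j * ((M - j).choose j) * 2^(M - 2*j)) * Polynomial.X ^ (M - 2*j)

lemma f_zero (M j : ℕ) (h : M < 2*j) : f M j = 0 := by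
  have : (M - j).choose j = 0 := Nat.choose_eq_zero_of_lt (by omega)
  simp [f, this]

lemma f_step (M j : ℕ) :
    f (M+2) (j+1) = 2 * Polynomial.X * f (M+1) (j+1) - f M j := by
  rcases lt_or_ge (M+1) (2*(j+1)) with h | h
  · rcases lt_or_ge M (2*j) with h2 | h2
    · rw [f_zero (M+2) (j+1) (by omega), f_zero (M+1) (j+1) (by omega), f_zero M j h2]
      ring
    · have hM : M = 2*j := by omega
      subst hM
      rw [f_zero (2*j+1) (j+1) (by omega), mul_zero, zero_sub]
      have e1 : 2*j + 2 - (j+1) = j + 1 := by omega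
      have e2 : 2*j + 2 - 2*(j+1) = 0 := by omega
      have e3 : 2*j - j = j := by omega
      have e4 : 2*j - 2*j = 0 := by omega
      simp only [f, e1, e2, e3, e4, Nat.choose_self, pow_zero, pow_succ]
      simp only [map_mul, map_pow, map_neg, map_one, map_ofNat, Nat.cast_one]
      ring
  · obtain ⟨k, hk⟩ : ∃ k, M - 2*j = k + 1 := ⟨M - 2*j - 1, by omega⟩
    have e1 : M + 2 - (j+1) = (M - j) + 1 := by omega
    have e2 : M + 2 - 2*(j+1) = k + 1 := by omega
    have e3 : M + 1 - (j+1) = M - j := by omega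
    have e4 : M + 1 - 2*(j+1) = k := by omega
    rw [f, f, f, e1, e2, e3, e4, hk, Nat.choose_succ_succ ((M-j)) j]
    simp only [pow_succ, Nat.cast_add]
    simp only [map_mul, map_pow, map_neg, map_one, map_ofNat, map_add, map_natCast]
    ring

lemma Uform (M : ℕ) : Polynomial.Chebyshev.U ℂ M = ∑ j ∈ range (M+1), f M j := by
  induction M using Nat.twoStepInduction with
  | zero => simpa [Polynomial.Chebyshev.U_zero] using by norm_num [f]
  | one =>
    rw [show ((1:ℕ):ℤ) = 1 by norm_num, Polynomial.Chebyshev.U_one]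
    rw [Finset.sum_range_succ, Finset.sum_range_one]
    norm_num [f]
    exact (map_ofNat Polynomial.C 2).symm
  | more M ih1 ih2 =>
    have hrec : Polynomial.Chebyshev.U ℂ ((M+2 : ℕ) : ℤ) =
        2 * X * Polynomial.Chebyshev.U ℂ ((M+1 : ℕ) : ℤ) - Polynomial.Chebyshev.U ℂ (M : ℤ) := by
      have := Polynomial.Chebyshev.U_add_two ℂ M
      push_cast
      convert this using 3
    rw [hrec, ih2, ih1]
    rw [Finset.sum_range_succ' (fun j => f (M+2) j) (M+2)]
    have key : ∑ i ∈ range (M+2), f (M+2) (i+1)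
        = ∑ i ∈ range (M+2), (2 * X * f (M+1) (i+1) - f M i) :=
      Finset.sum_congr rfl fun i _ => f_step M i
    rw [key, Finset.sum_sub_distrib]
    have h1 : ∑ i ∈ range (M+2), 2 * X * f (M+1) (i+1)
        = 2 * X * ∑ i ∈ range (M+2), f (M+1) (i+1) := by rw [Finset.mul_sum]
    have h2 : ∑ j ∈ range (M+3), f (M+1) j = ∑ i ∈ range (M+2), f (M+1) (i+1) + f (M+1) 0 :=
      Finset.sum_range_succ' _ _
    have h3 : ∑ j ∈ range (M+3), f (M+1) j = ∑ j ∈ range (M+2), f (M+1) j := by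
      rw [Finset.sum_range_succ, f_zero (M+1) (M+2) (by omega), add_zero]
    have h4 : f (M+2) 0 = 2 * X * f (M+1) 0 := by
      simp only [f, Nat.sub_zero, Nat.mul_zero, Nat.choose_zero_right]
      rw [show M+2 = (M+1)+1 from rfl, pow_succ 2 (M+1), pow_succ X (M+1)]
      simp only [map_mul, map_pow, map_one, map_ofNat, Nat.cast_one, pow_zero]
      ring
    have h5 : ∑ i ∈ range (M+2), f M i = ∑ i ∈ range (M+1), f M i := by
      rw [Finset.sum_range_succ, f_zero M (M+1) (by omega), add_zero]
    rw [h1, h4, h5, show M+1+1 = M+2 from rfl, ← h3, h2]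
    ring

theorem stmt2 (N s : ℕ) (hN : 1 ≤ N) (z : ℂ) :
    (1 / (2 ^ s * s.factorial : ℂ)) *
        (Polynomial.derivative^[s] (Polynomial.Chebyshev.U ℂ (N + s - 1))).eval z =
      ∑ j ∈ Finset.range ((N - 1) / 2 + 1),
        (-1 : ℂ) ^ j * ((N - 1 + s - j).choose j : ℂ) * ((N - 1 + s - 2 * j).choose s : ℂ) *
          2 ^ (N - 1 - 2 * j) * z ^ (N - 1 - 2 * j) := by
  set M := N + s - 1 with hMdef
  have hM : (↑N + ↑s - 1 : ℤ) = ((M : ℕ) : ℤ) := by omega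
  rw [hM, Uform M, Polynomial.iterate_derivative_sum, Polynomial.eval_finset_sum,
    Finset.mul_sum]
  have hterm : ∀ j ∈ Finset.range (M+1),
      (1 / (2 ^ s * s.factorial : ℂ)) * (Polynomial.derivative^[s] (f M j)).eval z
      = (1 / (2 ^ s * s.factorial : ℂ)) *
        ((-1:ℂ)^j * ((M - j).choose j) * 2^(M - 2*j) * ((M - 2*j).descFactorial s) *
          z ^ (M - 2*j - s)) := by
    intro j _
    rw [f, Polynomial.iterate_derivative_C_mul, Polynomial.iterate_derivative_X_pow_eq_C_mul]
    simp [mul_assoc]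
  rw [Finset.sum_congr rfl hterm]
  rw [← Finset.sum_subset
    (show Finset.range ((N-1)/2 + 1) ⊆ Finset.range (M+1) by
      apply Finset.range_subset_range.2; omega)
    (by
      intro j hj hj2
      simp only [Finset.mem_range] at hj hj2
      rcases lt_or_ge M (2*j) with h | h
      · have : (M - j).choose j = 0 := Nat.choose_eq_zero_of_lt (by omega)
        simp [this]
      · have : (M - 2*j).descFactorial s = 0 :=
          Nat.descFactorial_eq_zero_iff_lt.2 (by omega)
        simp [this])]
  apply Finset.sum_congr rfl
  intro j hj
  simp only [Finset.mem_range] at hj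
  have h2j : 2*j ≤ N - 1 := by omega
  have e1 : M - j = N - 1 + s - j := by omega
  have e2 : M - 2*j = N - 1 + s - 2*j := by omega
  have e3 : M - 2*j - s = N - 1 - 2*j := by omega
  have e4 : M - 2*j = s + (N - 1 - 2*j) := by omega
  rw [e1, e3, show (2:ℂ)^(M-2*j) = 2^s * 2^(N-1-2*j) by rw [e4, pow_add],
    show (M - 2*j).descFactorial s = s.factorial * (M - 2*j).choose s from
      Nat.descFactorial_eq_factorial_mul_choose _ _, e2]
  have h2 : (2:ℂ)^s ≠ 0 := pow_ne_zero _ two_ne_zero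
  have hf : (s.factorial : ℂ) ≠ 0 := Nat.cast_ne_zero.2 s.factorial_ne_zero
  push_cast
  field_simp
end

section
/- For every integer N ≥ 1 and every complex z with |z| < 1, the series ∑_{σ=0}^∞ z^σ · U_{N+σ-1}^{(σ)}(z) / (2^σ · σ!) converges to ∑_{j=0}^{⌊(N-1)/2⌋} (-1)^j · C(N-1-j, j) · (2z)^(N-1-2j) / (1-z)^(N-j). -/
open Polynomial Finset

/-- coefficient of the explicit formula for Chebyshev U -/
noncomputable def chebC (n j : ℕ) : ℂ :=
  (-1 : ℂ) ^ j * ((n - j).choose j : ℂ) * 2 ^ (n - 2 * j)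

noncomputable def chebT (n j : ℕ) : Polynomial ℂ :=
  Polynomial.C (chebC n j) * Polynomial.X ^ (n - 2 * j)

lemma chebT_zero {n j : ℕ} (h : n - j < j) : chebT n j = 0 := by
  simp [chebT, chebC, Nat.choose_eq_zero_of_lt h]

lemma U_explicit (n : ℕ) :
    Polynomial.Chebyshev.U ℂ (n : ℤ) = ∑ j ∈ range (n + 1), chebT n j := by
  induction n using Nat.twoStepInduction with
  | zero => simp [Polynomial.Chebyshev.U_zero, chebT, chebC]
  | one =>
      simp [Polynomial.Chebyshev.U_one, Finset.sum_range_succ, chebT, chebC,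
        Nat.choose_eq_zero_of_lt, map_ofNat]
  | more n ih1 ih2 =>
      have hrec := Polynomial.Chebyshev.U_add_two ℂ (n : ℤ)
      have hc2 : ((n + 2 : ℕ) : ℤ) = (n : ℤ) + 2 := by push_cast; ring
      have hc1 : ((n + 1 : ℕ) : ℤ) = (n : ℤ) + 1 := by push_cast; ring
      rw [hc2, hrec, ← hc1, ih2, ih1]
      -- now a pure combinatorial polynomial identity
      rw [Finset.sum_range_succ' _ (n + 2)]
      have key : ∀ i ∈ range (n + 2),
          chebT (n + 2) (i + 1) = 2 * X * chebT (n + 1) (i + 1) - chebT n i := by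
        intro i hi
        simp only [mem_range] at hi
        rcases lt_or_ge (2 * i) n with hcase | hcase
        · -- 2 * i < n : generic case
          simp only [chebT, chebC]
          rw [show n + 2 - (i + 1) = (n - i) + 1 by omega,
            show n + 1 - (i + 1) = n - i by omega,
            show n + 2 - 2 * (i + 1) = (n - 2 * i - 1) + 1 by omega,
            show n + 1 - 2 * (i + 1) = n - 2 * i - 1 by omega,
            show n - 2 * i = (n - 2 * i - 1) + 1 by omega,
            Nat.choose_succ_succ]
          push_cast
          simp only [map_mul, map_neg, map_add, map_pow, map_one, map_natCast, map_ofNat]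
          ring
        · rcases lt_or_ge i (n + 1) with hcase2 | hcase2
          · -- n ≤ 2 * i, i ≤ n
            have e1 : n + 2 - 2 * (i + 1) = 0 := by omega
            have e2 : n + 1 - 2 * (i + 1) = 0 := by omega
            have e3 : n - 2 * i = 0 := by omega
            have e2' : n + 2 - (i + 1) = (n - i) + 1 := by omega
            have e3' : n + 1 - (i + 1) = n - i := by omega
            have hz1 : (n - i).choose (i + 1) = 0 :=
              Nat.choose_eq_zero_of_lt (by omega)
            simp only [chebT, chebC, e1, e2, e3, e2', e3', Nat.choose_succ_succ, hz1]
            push_cast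
            simp only [map_mul, map_neg, map_add, map_pow, map_one, map_natCast, map_ofNat,
              map_zero]
            ring
          · -- i = n + 1
            have hi' : i = n + 1 := by omega
            subst hi'
            rw [chebT_zero (by omega), chebT_zero (by omega), chebT_zero (by omega)]
            ring
      rw [Finset.sum_congr rfl key, Finset.sum_sub_distrib]
      have h1 : ∑ i ∈ range (n + 2), chebT n i = ∑ i ∈ range (n + 1), chebT n i := by
        rw [Finset.sum_range_succ, chebT_zero (by omega), add_zero]
      have h2 : ∑ i ∈ range (n + 2), 2 * X * chebT (n + 1) (i + 1)
          = ∑ i ∈ range (n + 1), 2 * X * chebT (n + 1) (i + 1) := by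
        rw [Finset.sum_range_succ, chebT_zero (n := n + 1) (j := n + 2) (by omega),
          mul_zero, add_zero]
      have h3 : ∑ j ∈ range (n + 2), chebT (n + 1) j
          = ∑ i ∈ range (n + 1), chebT (n + 1) (i + 1) + chebT (n + 1) 0 :=
        Finset.sum_range_succ' _ (n + 1)
      have h4 : chebT (n + 2) 0 = 2 * X * chebT (n + 1) 0 := by
        simp only [chebT, chebC, Nat.sub_zero, Nat.mul_zero, Nat.choose_zero_right,
          pow_zero, Nat.cast_one, mul_one, one_mul]
        rw [pow_succ, map_mul, map_pow, map_ofNat]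
        ring
      rw [h1, h2, ← Finset.mul_sum, h3, h4]
      ring

lemma eval_term (z : ℂ) (σ n j : ℕ) :
    (Polynomial.derivative^[σ] (chebT n j)).eval z =
      chebC n j * ((n - 2 * j).descFactorial σ : ℂ) * z ^ (n - 2 * j - σ) := by
  rw [chebT, Polynomial.iterate_derivative_C_mul,
    Polynomial.iterate_derivative_X_pow_eq_natCast_mul]
  simp [mul_assoc]

lemma key_choose (A σ j : ℕ) (hj : j ≤ A) :
    (((A + σ).choose j : ℂ)) * ((A - j + σ).descFactorial σ : ℂ)
      = (A.choose j : ℂ) * ((σ + A).choose A : ℂ) * (σ.factorial : ℂ) := by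
  rw [Nat.descFactorial_eq_factorial_mul_choose]
  have c1 : ((A + σ).choose j : ℂ) = (Nat.factorial (A + σ) : ℂ) /
      ((Nat.factorial j : ℂ) * (Nat.factorial ((A + σ) - j) : ℂ)) :=
    Nat.cast_choose ℂ (by omega)
  have c2 : ((A - j + σ).choose σ : ℂ) = (Nat.factorial (A - j + σ) : ℂ) /
      ((Nat.factorial σ : ℂ) * (Nat.factorial ((A - j + σ) - σ) : ℂ)) :=
    Nat.cast_choose ℂ (by omega)
  have c3 : (A.choose j : ℂ) = (Nat.factorial A : ℂ) /
      ((Nat.factorial j : ℂ) * (Nat.factorial (A - j) : ℂ)) := Nat.cast_choose ℂ hj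
  have c4 : ((σ + A).choose A : ℂ) = (Nat.factorial (σ + A) : ℂ) /
      ((Nat.factorial A : ℂ) * (Nat.factorial ((σ + A) - A) : ℂ)) :=
    Nat.cast_choose ℂ (by omega)
  have e1 : A + σ - j = A - j + σ := by omega
  have e2 : A - j + σ - σ = A - j := by omega
  have e3 : σ + A - A = σ := by omega
  have e4 : σ + A = A + σ := by omega
  push_cast
  rw [c1, c2, c3, c4, e1, e2, e3, e4]
  have f1 : ((Nat.factorial j : ℂ)) ≠ 0 := Nat.cast_ne_zero.2 (Nat.factorial_ne_zero j)
  have f2 : ((Nat.factorial (A - j) : ℂ)) ≠ 0 := Nat.cast_ne_zero.2 (Nat.factorial_ne_zero _)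
  have f3 : ((Nat.factorial σ : ℂ)) ≠ 0 := Nat.cast_ne_zero.2 (Nat.factorial_ne_zero σ)
  have f4 : ((Nat.factorial (A - j + σ) : ℂ)) ≠ 0 := Nat.cast_ne_zero.2 (Nat.factorial_ne_zero _)
  have f5 : ((Nat.factorial A : ℂ)) ≠ 0 := Nat.cast_ne_zero.2 (Nat.factorial_ne_zero A)
  field_simp

lemma pointwise (N : ℕ) (hN : 1 ≤ N) (z : ℂ) (σ : ℕ) :
    z ^ σ * (Polynomial.derivative^[σ] (Polynomial.Chebyshev.U ℂ (N + σ - 1))).eval z /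
        (2 ^ σ * σ.factorial) =
      ∑ j ∈ range ((N - 1) / 2 + 1),
        ((-1 : ℂ) ^ j * ((N - 1 - j).choose j : ℂ) * (2 * z) ^ (N - 1 - 2 * j)) *
          (((σ + (N - 1 - j)).choose (N - 1 - j) : ℂ) * z ^ σ) := by
  have hidx : (N : ℤ) + σ - 1 = ((N - 1 + σ : ℕ) : ℤ) := by omega
  rw [hidx, U_explicit, Polynomial.iterate_derivative_sum, Polynomial.eval_finset_sum]
  set n := N - 1 + σ with hn
  have hsub : range ((N - 1) / 2 + 1) ⊆ range (n + 1) := by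
    apply Finset.range_subset_range.2; omega
  have hvan : ∀ j ∈ range (n + 1), j ∉ range ((N - 1) / 2 + 1) →
      (Polynomial.derivative^[σ] (chebT n j)).eval z = 0 := by
    intro j hj hj'
    simp only [mem_range] at hj hj'
    have h2j : N ≤ 2 * j := by omega
    rw [eval_term]
    rcases Nat.eq_zero_or_pos σ with hσ | hσ
    · subst hσ
      have : (n - j).choose j = 0 := Nat.choose_eq_zero_of_lt (by omega)
      simp [chebC, this]
    · have : (n - 2 * j).descFactorial σ = 0 :=
        Nat.descFactorial_eq_zero_iff_lt.2 (by omega)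
      simp [this]
  rw [← Finset.sum_subset hsub hvan, Finset.mul_sum, Finset.sum_div]
  refine Finset.sum_congr rfl fun j hj => ?_
  simp only [mem_range] at hj
  have h2j : 2 * j ≤ N - 1 := by omega
  rw [eval_term]
  have e1 : n - 2 * j = (N - 1 - j) - j + σ := by omega
  have e2 : n - 2 * j - σ = N - 1 - 2 * j := by omega
  have e3 : n - j = (N - 1 - j) + σ := by omega
  have e4 : N - 1 - 2 * j = (N - 1 - j) - j := by omega
  set A := N - 1 - j with hA
  have hjA : j ≤ A := by omega
  have hkey := key_choose A σ j hjA
  simp only [chebC, e1, e2, e3, e4]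
  have h2 : (2 : ℂ) ^ (A - j + σ) = 2 ^ (A - j) * 2 ^ σ := pow_add 2 _ _
  have hfac : ((σ.factorial : ℂ)) ≠ 0 := Nat.cast_ne_zero.2 (Nat.factorial_ne_zero σ)
  have h2σ : ((2 : ℂ) ^ σ) ≠ 0 := pow_ne_zero σ two_ne_zero
  rw [h2, mul_pow]
  field_simp
  rw [Nat.add_sub_cancel]
  linear_combination (z ^ σ * z ^ (A - j)) * hkey

theorem stmt5 (N : ℕ) (hN : 1 ≤ N) (z : ℂ) (hz : ‖z‖ < 1) :
    HasSum
      (fun σ : ℕ =>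
        z ^ σ * (Polynomial.derivative^[σ] (Polynomial.Chebyshev.U ℂ (N + σ - 1))).eval z /
          (2 ^ σ * σ.factorial))
      (∑ j ∈ Finset.range ((N - 1) / 2 + 1),
        (-1 : ℂ) ^ j * ((N - 1 - j).choose j : ℂ) * (2 * z) ^ (N - 1 - 2 * j) /
          (1 - z) ^ (N - j)) := by
  have H : ∀ j ∈ range ((N - 1) / 2 + 1),
      HasSum
        (fun σ : ℕ =>
          ((-1 : ℂ) ^ j * ((N - 1 - j).choose j : ℂ) * (2 * z) ^ (N - 1 - 2 * j)) *
            (((σ + (N - 1 - j)).choose (N - 1 - j) : ℂ) * z ^ σ))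
        ((-1 : ℂ) ^ j * ((N - 1 - j).choose j : ℂ) * (2 * z) ^ (N - 1 - 2 * j) /
          (1 - z) ^ (N - j)) := by
    intro j hj
    simp only [mem_range] at hj
    have h := (hasSum_choose_mul_geometric_of_norm_lt_one (N - 1 - j) hz).mul_left
      ((-1 : ℂ) ^ j * ((N - 1 - j).choose j : ℂ) * (2 * z) ^ (N - 1 - 2 * j))
    have he : (N - 1 - j) + 1 = N - j := by omega
    rw [he] at h
    simpa [div_eq_mul_inv] using h
  have := hasSum_sum H
  convert this using 1
  funext σ
  exact pointwise N hN z σ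
end

section
/- For every odd integer k ≥ 1 and integer N ≥ 1, F_{Nk}/F_k = (-i)^(N-1) · U_{N-1}((i/2)·L_k), and for every even integer k ≥ 2 and N ≥ 1, F_{Nk}/F_k = U_{N-1}((1/2)·L_k). -/
/-- The Lucas numbers: `L_0 = 2`, `L_1 = 1`, `L_{n+2} = L_{n+1} + L_n`
(so `L_1 = 1`, `L_2 = 3`). -/
def lucas : ℕ → ℕ
  | 0 => 2
  | 1 => 1
  | n + 2 => lucas (n + 1) + lucas n

lemma lucas_eq : ∀ n : ℕ, (lucas n : ℤ) = 2 * Nat.fib (n + 1) - Nat.fib n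
  | 0 => by simp [lucas]
  | 1 => by simp [lucas]
  | n + 2 => by
    have h1 := lucas_eq (n + 1)
    have h2 := lucas_eq n
    show ((lucas (n + 1) + lucas n : ℕ) : ℤ) = _
    push_cast [Nat.fib_add_two] at h1 h2 ⊢
    linarith

lemma cassini_gen : ∀ k m : ℕ,
    (Nat.fib (k + 1) : ℤ) * Nat.fib (m + k) - Nat.fib k * Nat.fib (m + k + 1)
      = (-1) ^ k * Nat.fib m
  | 0, m => by simp
  | k + 1, m => by
    have h := cassini_gen k m
    show (Nat.fib (k + 2) : ℤ) * Nat.fib (m + k + 1)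
        - Nat.fib (k + 1) * Nat.fib (m + k + 2) = (-1) ^ (k + 1) * Nat.fib m
    push_cast [Nat.fib_add_two] at h ⊢
    linear_combination -h

lemma key (k m : ℕ) (hk : 1 ≤ k) :
    (Nat.fib (m + 2 * k) : ℤ) = lucas k * Nat.fib (m + k) - (-1) ^ k * Nat.fib m := by
  obtain ⟨j, rfl⟩ : ∃ j, k = j + 1 := ⟨k - 1, by omega⟩
  have hadd : m + 2 * (j + 1) = (m + j + 1) + j + 1 := by ring
  have h1 := Nat.fib_add (m + j + 1) j
  have h2 := cassini_gen (j + 1) m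
  have h3 := lucas_eq (j + 1)
  have h4 : (Nat.fib (j + 2) : ℤ) = Nat.fib j + Nat.fib (j + 1) := by
    push_cast [Nat.fib_add_two]; ring
  have e1 : m + (j + 1) = m + j + 1 := by omega
  have e3 : j + 1 + 1 = j + 2 := by omega
  rw [e3, e1] at h2
  rw [e3] at h3
  rw [hadd, h1, e1, h3]
  push_cast at h2 ⊢
  linear_combination -h2 - (Nat.fib (m + j + 1) : ℤ) * h4

lemma cheb (c : ℂ) (s : ℕ → ℂ) (h0 : s 0 = 1) (h1 : s 1 = 2 * c)
    (hrec : ∀ n, s (n + 2) = 2 * c * s (n + 1) - s n) :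
    ∀ n, s n = (Polynomial.Chebyshev.U ℂ n).eval c
  | 0 => by simpa [Polynomial.Chebyshev.U_zero] using h0
  | 1 => by simpa [Polynomial.Chebyshev.U_one] using h1
  | n + 2 => by
    rw [hrec n, cheb c s h0 h1 hrec (n + 1), cheb c s h0 h1 hrec n]
    push_cast
    rw [Polynomial.Chebyshev.U_add_two]
    simp only [Polynomial.eval_sub, Polynomial.eval_mul, Polynomial.eval_ofNat,
      Polynomial.eval_X]
    try push_cast
    try ring

theorem stmt10 (N k : ℕ) (hN : 1 ≤ N) (hk : 1 ≤ k) :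
    (Odd k →
      (Nat.fib (N * k) : ℂ) / (Nat.fib k : ℂ) =
        (-Complex.I) ^ (N - 1) *
          (Polynomial.Chebyshev.U ℂ (N - 1)).eval (Complex.I / 2 * (lucas k : ℂ))) ∧
    (Even k →
      (Nat.fib (N * k) : ℂ) / (Nat.fib k : ℂ) =
        (Polynomial.Chebyshev.U ℂ (N - 1)).eval ((lucas k : ℂ) / 2)) := by
  obtain ⟨M, rfl⟩ : ∃ M, N = M + 1 := ⟨N - 1, by omega⟩
  have hfk : (Nat.fib k : ℂ) ≠ 0 := by
    simpa [Nat.fib_eq_zero] using (by omega : k ≠ 0)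
  have keyC : ∀ m : ℕ, (Nat.fib (m + 2 * k) : ℂ)
      = (lucas k : ℂ) * Nat.fib (m + k) - (-1) ^ k * Nat.fib m := by
    intro m
    exact_mod_cast congrArg (fun z : ℤ => (z : ℂ)) (key k m hk)
  have h2k : (Nat.fib (2 * k) : ℂ) = (lucas k : ℂ) * Nat.fib k := by
    simpa using keyC 0
  simp only [Nat.add_sub_cancel, Nat.cast_add, Nat.cast_one, add_sub_cancel_right]
  constructor
  · intro hodd
    have hI : Complex.I ^ 2 = -1 := Complex.I_sq
    have hU := cheb (Complex.I / 2 * (lucas k : ℂ))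
      (fun n => Complex.I ^ n * (Nat.fib ((n + 1) * k) : ℂ) / (Nat.fib k : ℂ))
      (by
        show Complex.I ^ 0 * (Nat.fib ((0 + 1) * k) : ℂ) / (Nat.fib k : ℂ) = 1
        norm_num [div_self hfk])
      (by
        show Complex.I ^ 1 * (Nat.fib ((1 + 1) * k) : ℂ) / (Nat.fib k : ℂ) = _
        have e : (1 + 1) * k = 2 * k := by ring
        rw [e, h2k]
        field_simp)
      (by
        intro n
        show Complex.I ^ (n + 2) * (Nat.fib ((n + 2 + 1) * k) : ℂ) / (Nat.fib k : ℂ)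
          = 2 * (Complex.I / 2 * (lucas k : ℂ)) *
              (Complex.I ^ (n + 1) * (Nat.fib ((n + 1 + 1) * k) : ℂ) / (Nat.fib k : ℂ))
            - Complex.I ^ n * (Nat.fib ((n + 1) * k) : ℂ) / (Nat.fib k : ℂ)
        have h := keyC ((n + 1) * k)
        have e1 : (n + 1) * k + 2 * k = (n + 2 + 1) * k := by ring
        have e2 : (n + 1) * k + k = (n + 1 + 1) * k := by ring
        rw [e1, e2, hodd.neg_one_pow] at h
        linear_combination (Complex.I ^ (n + 2) / (Nat.fib k : ℂ)) * h
          + (Complex.I ^ n * (Nat.fib ((n + 1) * k) : ℂ) / (Nat.fib k : ℂ)) * hI)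
      M
    have h1 : (-Complex.I) ^ M * Complex.I ^ M = 1 := by
      rw [← mul_pow, neg_mul, Complex.I_mul_I, neg_neg, one_pow]
    rw [← hU]
    linear_combination (-(Nat.fib ((M + 1) * k) : ℂ) / (Nat.fib k : ℂ)) * h1
  · intro heven
    have hU := cheb ((lucas k : ℂ) / 2)
      (fun n => (Nat.fib ((n + 1) * k) : ℂ) / (Nat.fib k : ℂ))
      (by
        show (Nat.fib ((0 + 1) * k) : ℂ) / (Nat.fib k : ℂ) = 1
        norm_num [div_self hfk])
      (by
        show (Nat.fib ((1 + 1) * k) : ℂ) / (Nat.fib k : ℂ) = _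
        have e : (1 + 1) * k = 2 * k := by ring
        rw [e, h2k]
        field_simp)
      (by
        intro n
        show (Nat.fib ((n + 2 + 1) * k) : ℂ) / (Nat.fib k : ℂ)
          = 2 * ((lucas k : ℂ) / 2) * ((Nat.fib ((n + 1 + 1) * k) : ℂ) / (Nat.fib k : ℂ))
            - (Nat.fib ((n + 1) * k) : ℂ) / (Nat.fib k : ℂ)
        have h := keyC ((n + 1) * k)
        have e1 : (n + 1) * k + 2 * k = (n + 2 + 1) * k := by ring
        have e2 : (n + 1) * k + k = (n + 1 + 1) * k := by ring
        rw [e1, e2, heven.neg_one_pow] at h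
        linear_combination (1 / (Nat.fib k : ℂ)) * h)
      M
    simpa using hU
end

section
/- For integers N ≥ 1 and k ≥ 1, F_{Nk}/F_k = ∑_{j=0}^{⌊(N-1)/2⌋} (-1)^((k-1)·j) · C(N-1-j, j) · L_k^(N-1-2j). -/
private lemma lucas_succ_cast (t : ℕ) :
    (lucas (t + 1) : ℚ) = Nat.fib t + Nat.fib (t + 2) := by
  induction t using Nat.twoStepInduction with
  | zero => simp [lucas]
  | one =>
      have h : lucas 2 = 3 := rfl
      rw [h]
      norm_num [Nat.fib_add_two]
  | more n ih1 ih2 =>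
      have h : lucas (n + 2 + 1) = lucas (n + 1 + 1) + lucas (n + 1) := rfl
      have q1 : (Nat.fib (n + 1 + 2) : ℚ) = Nat.fib (n + 1) + Nat.fib (n + 2) := by
        exact_mod_cast congrArg (Nat.cast : ℕ → ℚ) (Nat.fib_add_two (n := n + 1))
      have q2 : (Nat.fib (n + 2 + 2) : ℚ) = Nat.fib (n + 2) + Nat.fib (n + 1 + 2) := by
        exact_mod_cast congrArg (Nat.cast : ℕ → ℚ) (Nat.fib_add_two (n := n + 2))
      have q0 : (Nat.fib (n + 2) : ℚ) = Nat.fib n + Nat.fib (n + 1) := by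
        exact_mod_cast congrArg (Nat.cast : ℕ → ℚ) (Nat.fib_add_two (n := n))
      rw [h]
      push_cast
      rw [ih1, ih2, q2, q1, q0]
      ring

private lemma cassini_q (n : ℕ) :
    (Nat.fib (n + 1) : ℚ) ^ 2 - Nat.fib (n + 1) * Nat.fib n - (Nat.fib n : ℚ) ^ 2
      = (-1) ^ n := by
  induction n with
  | zero => simp
  | succ n ih =>
      have f : Nat.fib (n + 1 + 1) = Nat.fib n + Nat.fib (n + 1) := Nat.fib_add_two
      rw [f]
      push_cast
      rw [pow_succ]
      linear_combination -ih

private lemma fib_step (a t : ℕ) :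
    (Nat.fib (a + 2 * (t + 1)) : ℚ)
      = lucas (t + 1) * Nat.fib (a + (t + 1)) - (-1) ^ (t + 1) * Nat.fib a := by
  have e1 : a + 2 * (t + 1) = a + (2 * t + 1) + 1 := by ring
  have e2 : a + (t + 1) = a + t + 1 := by ring
  have h1 := Nat.fib_add a (2 * t + 1)
  have h2 := Nat.fib_add a t
  have h3 := Nat.fib_two_mul_add_one t
  have h4 : Nat.fib (2 * t + 1 + 1) = Nat.fib (t + 1) * (2 * Nat.fib t + Nat.fib (t + 1)) :=
    Nat.fib_two_mul_add_two t
  have e3 : Nat.fib (t + 2) = Nat.fib t + Nat.fib (t + 1) := Nat.fib_add_two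
  rw [e1, e2, h1, h2, h3, h4, lucas_succ_cast t, e3]
  push_cast
  rw [pow_succ]
  linear_combination (Nat.fib a : ℚ) * cassini_q t

private lemma pascal_q (m i : ℕ) :
    ((m + 1 - i).choose (i + 1) : ℚ) = (m - i).choose i + (m - i).choose (i + 1) := by
  rcases le_or_gt i m with h | h
  · have e : m + 1 - i = (m - i) + 1 := by omega
    rw [e, Nat.choose_succ_succ']
    push_cast
    ring
  · have hi : 0 < i := by omega
    have z1 : (0:ℕ).choose (i + 1) = 0 := Nat.choose_eq_zero_of_lt (by omega)
    have z2 : (0:ℕ).choose i = 0 := Nat.choose_eq_zero_of_lt hi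
    rw [show m + 1 - i = 0 by omega, show m - i = 0 by omega, z1, z2]
    norm_num

private lemma sum_rec (x ε : ℚ) (m : ℕ) :
    ∑ j ∈ Finset.range (m + 4), ε ^ j * ((m + 2 - j).choose j : ℚ) * x ^ (m + 2 - 2 * j) =
      x * ∑ j ∈ Finset.range (m + 3), ε ^ j * ((m + 1 - j).choose j : ℚ) * x ^ (m + 1 - 2 * j) +
        ε * ∑ j ∈ Finset.range (m + 2), ε ^ j * ((m - j).choose j : ℚ) * x ^ (m - 2 * j) := by
  rw [Finset.mul_sum, Finset.mul_sum,
    Finset.sum_range_succ' (fun j => x * (ε ^ j * ((m + 1 - j).choose j : ℚ) * x ^ (m + 1 - 2 * j))) (m + 2),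
    Finset.sum_range_succ' (fun j => ε ^ j * ((m + 2 - j).choose j : ℚ) * x ^ (m + 2 - 2 * j)) (m + 3),
    Finset.sum_range_succ (fun i => ε ^ (i + 1) * ((m + 2 - (i + 1)).choose (i + 1) : ℚ) * x ^ (m + 2 - 2 * (i + 1))) (m + 2)]
  have hz : ((m + 2 - (m + 2 + 1)).choose (m + 2 + 1) : ℚ) = 0 := by
    rw [show m + 2 - (m + 2 + 1) = 0 by omega, Nat.choose_eq_zero_of_lt (by omega)]
    norm_num
  rw [hz]
  have hterm : ∀ i ∈ Finset.range (m + 2),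
      ε ^ (i + 1) * ((m + 2 - (i + 1)).choose (i + 1) : ℚ) * x ^ (m + 2 - 2 * (i + 1))
        = x * (ε ^ (i + 1) * ((m + 1 - (i + 1)).choose (i + 1) : ℚ) * x ^ (m + 1 - 2 * (i + 1)))
          + ε ^ i * ((m - i).choose i : ℚ) * x ^ (m - 2 * i) * ε := by
    intro i _
    rw [show m + 2 - (i + 1) = m + 1 - i by omega, show m + 2 - 2 * (i + 1) = m - 2 * i by omega,
      show m + 1 - (i + 1) = m - i by omega, pascal_q m i]
    rcases le_or_gt (2 * (i + 1)) (m + 1) with h | h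
    · obtain ⟨d, hd⟩ : ∃ d, m - 2 * i = d + 1 := ⟨m - 2 * i - 1, by omega⟩
      rw [show m + 1 - 2 * (i + 1) = d by omega, hd, pow_succ]
      ring
    · have hz2 : ((m - i).choose (i + 1) : ℚ) = 0 := by
        rw [Nat.choose_eq_zero_of_lt (by omega)]
        norm_num
      rw [hz2]
      ring
  have hsum : ∀ i ∈ Finset.range (m + 2),
      ε ^ i * ((m - i).choose i : ℚ) * x ^ (m - 2 * i) * ε
        = ε * (ε ^ i * ((m - i).choose i : ℚ) * x ^ (m - 2 * i)) := fun i _ => by ring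
  rw [Finset.sum_congr rfl hterm, Finset.sum_add_distrib, Finset.sum_congr rfl hsum]
  simp only [mul_zero, zero_mul, add_zero, Nat.sub_zero, pow_zero,
    Nat.choose_zero_right, Nat.cast_one, one_mul, mul_one]
  rw [show x * x ^ (m + 1) = x ^ (m + 2) from by rw [← pow_succ']]
  ring

theorem stmt11 (N k : ℕ) (hN : 1 ≤ N) (hk : 1 ≤ k) :
    (Nat.fib (N * k) : ℚ) / (Nat.fib k : ℚ) =
      ∑ j ∈ Finset.range ((N - 1) / 2 + 1),
        (-1 : ℚ) ^ ((k - 1) * j) * ((N - 1 - j).choose j : ℚ) *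
          (lucas k : ℚ) ^ (N - 1 - 2 * j) := by
  obtain ⟨t, rfl⟩ : ∃ t, k = t + 1 := ⟨k - 1, by omega⟩
  obtain ⟨n, rfl⟩ : ∃ n, N = n + 1 := ⟨N - 1, by omega⟩
  have hfibk : (Nat.fib (t + 1) : ℚ) ≠ 0 := by
    have := Nat.fib_pos.mpr (Nat.succ_pos t)
    positivity
  have key : ∀ m : ℕ, (Nat.fib ((m + 1) * (t + 1)) : ℚ)
      = Nat.fib (t + 1) * ∑ j ∈ Finset.range (m + 2),
          ((-1 : ℚ) ^ t) ^ j * ((m - j).choose j : ℚ) * (lucas (t + 1) : ℚ) ^ (m - 2 * j) := by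
    intro m
    induction m using Nat.twoStepInduction with
    | zero => simp [Finset.sum_range_succ]
    | one =>
        have h1 : (∑ j ∈ Finset.range (1 + 2),
            ((-1 : ℚ) ^ t) ^ j * ((1 - j).choose j : ℚ) * (lucas (t + 1) : ℚ) ^ (1 - 2 * j))
            = (lucas (t + 1) : ℚ) := by
          simp [Finset.sum_range_succ]
        have h2 := fib_step 0 t
        simp only [zero_add, Nat.fib_zero, Nat.cast_zero, mul_zero, sub_zero] at h2
        have e : (1 + 1) * (t + 1) = 2 * (t + 1) := by ring
        rw [h1, e, h2]
        ring
    | more m ih1 ih2 =>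
        have e1 : (m + 2 + 1) * (t + 1) = (m + 1) * (t + 1) + 2 * (t + 1) := by ring
        have e2 : (m + 1) * (t + 1) + (t + 1) = (m + 1 + 1) * (t + 1) := by ring
        have e3 : m + 2 + 2 = m + 4 := by omega
        have e4 : m + 1 + 2 = m + 3 := by omega
        have hsign : ((-1 : ℚ) ^ t) = -(-1 : ℚ) ^ (t + 1) := by rw [pow_succ]; ring
        rw [e1, fib_step ((m + 1) * (t + 1)) t, e2, ih1, ih2, e3,
          sum_rec (lucas (t + 1) : ℚ) ((-1 : ℚ) ^ t) m, e4, hsign]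
        ring
  rw [key n, mul_div_cancel_left₀ _ hfibk]
  simp only [Nat.add_sub_cancel]
  have hterm : ∀ j ∈ Finset.range (n / 2 + 1),
      (-1 : ℚ) ^ (t * j) * ((n - j).choose j : ℚ) * (lucas (t + 1) : ℚ) ^ (n - 2 * j)
      = ((-1 : ℚ) ^ t) ^ j * ((n - j).choose j : ℚ) * (lucas (t + 1) : ℚ) ^ (n - 2 * j) := by
    intro j _
    rw [← pow_mul]
  rw [Finset.sum_congr rfl hterm]
  refine (Finset.sum_subset (fun j hj => ?_) (fun j hj hnj => ?_)).symm
  · simp only [Finset.mem_range] at hj ⊢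
    omega
  · simp only [Finset.mem_range] at hj hnj
    have hz : ((n - j).choose j : ℚ) = 0 := by
      rw [Nat.choose_eq_zero_of_lt (by omega)]
      norm_num
    rw [hz]
    ring
end
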